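/- arXiv:2504.10892 — 4 statements merged into one kernel-verified Lean document; each statement's English description precedes it below -/
import Mathlib

section
/- Let C ⊆ ℝ³ be a set invariant under the half rotation ρ_z about the z-axis, i.e. ρ_z '' C = C where ρ_z(x,y,z) = (-x,-y,z), and suppose C is disjoint from the z-axis {(0,0,t) | t ∈ ℝ}. Let D be the double-point set of the projection π_z(x,y,z) = (x,y) restricted to C, i.e. D = {q ∈ ℝ² | ∃ p₁, p₂ ∈ C, p₁ ≠ p₂ and π_z(p₁) = q and π_z(p₂) = q}. If D is finite, then the cardinality of D is even. -/
open Set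

noncomputable section

/-- Projection along the z-axis onto the x-y-plane. -/
def projZ : ℝ × ℝ × ℝ → ℝ × ℝ := fun p => (p.1, p.2.1)

/-- Projection along the y-axis onto the x-z-plane. -/
def projY : ℝ × ℝ × ℝ → ℝ × ℝ := fun p => (p.1, p.2.2)

/-- Projection along the x-axis onto the y-z-plane. -/
def projX : ℝ × ℝ × ℝ → ℝ × ℝ := fun p => (p.2.1, p.2.2)

/-- Half rotation about the x-axis. -/
def rotX : ℝ × ℝ × ℝ → ℝ × ℝ × ℝ := fun p => (p.1, -p.2.1, -p.2.2)

/-- Half rotation about the y-axis. -/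
def rotY : ℝ × ℝ × ℝ → ℝ × ℝ × ℝ := fun p => (-p.1, p.2.1, -p.2.2)

/-- Half rotation about the z-axis. -/
def rotZ : ℝ × ℝ × ℝ → ℝ × ℝ × ℝ := fun p => (-p.1, -p.2.1, p.2.2)

/-- The double-point set of a projection `π` restricted to `C`. -/
def doublePoints (π : ℝ × ℝ × ℝ → ℝ × ℝ) (C : Set (ℝ × ℝ × ℝ)) : Set (ℝ × ℝ) :=
  {q | ∃ p₁ ∈ C, ∃ p₂ ∈ C, p₁ ≠ p₂ ∧ π p₁ = q ∧ π p₂ = q}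

/-- A finset closed under a fixed-point-free involution has even cardinality. -/
lemma even_card_of_invol {α : Type*} [DecidableEq α] (f : α → α)
    (s : Finset α) (hmem : ∀ x ∈ s, f x ∈ s) (hinv : ∀ x ∈ s, f (f x) = x)
    (hne : ∀ x ∈ s, f x ≠ x) : Even s.card := by
  induction s using Finset.strongInduction with
  | _ s ih =>
    rcases s.eq_empty_or_nonempty with rfl | ⟨a, ha⟩
    · simp
    · have hfa : f a ∈ s := hmem a ha
      have hfaa : f a ≠ a := hne a ha
      set t := (s.erase a).erase (f a) with ht
      have hts : t ⊂ s := by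
        refine Finset.ssubset_of_subset_of_ssubset ?_ (Finset.erase_ssubset ha)
        exact Finset.erase_subset _ _
      have htmem : ∀ x ∈ t, x ∈ s := fun x hx => hts.1 hx
      have hcard : s.card = t.card + 2 := by
        rw [ht, Finset.card_erase_of_mem (by simp [Finset.mem_erase, hfaa, hfa]),
          Finset.card_erase_of_mem ha]
        have : 1 ≤ s.card := Finset.card_pos.mpr ⟨a, ha⟩
        have h2 : 2 ≤ s.card := by
          refine Finset.one_lt_card.mpr ⟨a, ha, f a, hfa, fun h => hfaa h.symm⟩
        omega
      have het : Even t.card := by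
        refine ih t hts (fun x hx => ?_) (fun x hx => hinv x (htmem x hx))
          (fun x hx => hne x (htmem x hx))
        have hxs := htmem x hx
        have hxa : x ≠ a := by rw [ht] at hx; exact Finset.ne_of_mem_erase (Finset.mem_of_mem_erase hx)
        have hxfa : x ≠ f a := by rw [ht] at hx; exact Finset.ne_of_mem_erase hx
        rw [ht]
        refine Finset.mem_erase.mpr ⟨?_, Finset.mem_erase.mpr ⟨?_, hmem x hxs⟩⟩
        · intro h; exact hxa (by rw [← hinv x hxs, h, hinv a ha])
        · intro h; exact hxfa (by rw [← hinv x hxs, h])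
      rw [hcard]
      exact het.add even_two

theorem even_crossings_of_period_two (C : Set (ℝ × ℝ × ℝ))
    (hsym : rotZ '' C = C)
    (haxis : C ∩ {p : ℝ × ℝ × ℝ | ∃ t : ℝ, p = (0, 0, t)} = ∅)
    (D : Set (ℝ × ℝ)) (hD : D = doublePoints projZ C) (hfin : D.Finite) :
    Even D.ncard := by
  classical
  -- negation is a fixed-point-free involution on D
  have hrot : ∀ p ∈ C, rotZ p ∈ C := by
    intro p hp
    rw [← hsym]; exact ⟨p, hp, rfl⟩
  have hneg : ∀ q ∈ D, -q ∈ D := by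
    intro q hq
    rw [hD] at hq ⊢
    obtain ⟨p₁, hp₁, p₂, hp₂, hne, h1, h2⟩ := hq
    refine ⟨rotZ p₁, hrot p₁ hp₁, rotZ p₂, hrot p₂ hp₂, ?_, ?_, ?_⟩
    · intro h
      apply hne
      have : rotZ (rotZ p₁) = rotZ (rotZ p₂) := by rw [h]
      simpa [rotZ, Prod.ext_iff] using this
    · simp [rotZ, projZ, ← h1, Prod.ext_iff]
    · simp [rotZ, projZ, ← h2, Prod.ext_iff]
  have hfix : ∀ q ∈ D, -q ≠ q := by
    intro q hq h
    rw [hD] at hq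
    obtain ⟨p₁, hp₁, _, _, _, h1, _⟩ := hq
    have hq0 : q = 0 := by
      obtain ⟨h1', h2'⟩ := Prod.ext_iff.mp h
      simp only [Prod.fst_neg, Prod.snd_neg] at h1' h2'
      have : q.1 = 0 := by linarith
      have : q.2 = 0 := by linarith
      ext <;> simp [*]
    have : p₁ ∈ C ∩ {p : ℝ × ℝ × ℝ | ∃ t : ℝ, p = (0, 0, t)} := by
      refine ⟨hp₁, ⟨p₁.2.2, ?_⟩⟩
      have h1' : p₁.1 = 0 ∧ p₁.2.1 = 0 := by
        have := h1
        rw [hq0] at this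
        simpa [projZ, Prod.ext_iff] using this
      ext <;> simp [h1'.1, h1'.2]
    rw [haxis] at this
    exact this
  -- transfer to finsets
  rw [Set.ncard_eq_toFinset_card D hfin]
  refine even_card_of_invol (fun q => -q) _ ?_ ?_ ?_
  · intro x hx
    simp only [Set.Finite.mem_toFinset] at hx ⊢
    exact hneg x hx
  · intro x _; simp
  · intro x hx
    simp only [Set.Finite.mem_toFinset] at hx
    exact hfix x hx
end
end

section
/- Let C ⊆ ℝ³ be a set invariant under the half rotation ρ_x about the x-axis, i.e. ρ_x '' C = C where ρ_x(x,y,z) = (x,-y,-z), and suppose the intersection of C with the x-axis {(t,0,0) | t ∈ ℝ} consists of exactly two points. Let D be the double-point set of the projection π_x(x,y,z) = (y,z) restricted to C, i.e. D = {q ∈ ℝ² | ∃ p₁, p₂ ∈ C, p₁ ≠ p₂ and π_x(p₁) = q and π_x(p₂) = q}. If D is finite, then the cardinality of D is odd. -/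
open Set

noncomputable section

/-- A finite set carrying a fixed-point-free involution has even cardinality. -/
lemma even_ncard_of_involution {α : Type*} :
    ∀ n : ℕ, ∀ s : Set α, s.Finite → s.ncard = n →
    ∀ f : α → α, (∀ x ∈ s, f x ∈ s) → (∀ x ∈ s, f (f x) = x) → (∀ x ∈ s, f x ≠ x) →
    Even n := by
  intro n
  induction n using Nat.strong_induction_on with
  | _ n ih =>
    intro s hs hn f hmap hinv hne
    rcases s.eq_empty_or_nonempty with rfl | ⟨a, ha⟩
    · subst hn; simp
    · have hfa : f a ∈ s := hmap a ha
      have hfa_ne : f a ≠ a := hne a ha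
      set s' : Set α := s \ {a, f a} with hs'
      have hs'fin : s'.Finite := hs.diff
      have hsub : ({a, f a} : Set α) ⊆ s := by
        intro x hx; rcases hx with rfl | rfl
        · exact ha
        · exact hfa
      have hcard : s.ncard = s'.ncard + 2 := by
        have h2 : ({a, f a} : Set α).ncard = 2 := Set.ncard_pair (Ne.symm hfa_ne)
        have h3 := Set.ncard_diff_add_ncard_of_subset hsub hs
        rw [← hs'] at h3
        omega
      have hmap' : ∀ x ∈ s', f x ∈ s' := by
        rintro x ⟨hxs, hx2⟩
        refine ⟨hmap x hxs, ?_⟩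
        intro h
        rcases h with h | h
        · apply hx2; right; rw [← h, hinv x hxs]; rfl
        · apply hx2; left
          have := congrArg f h
          rw [hinv x hxs, hinv a ha] at this
          exact this
      have hinv' : ∀ x ∈ s', f (f x) = x := fun x hx => hinv x hx.1
      have hne' : ∀ x ∈ s', f x ≠ x := fun x hx => hne x hx.1
      have : Even s'.ncard := ih s'.ncard (by omega) s' hs'fin rfl f hmap' hinv' hne'
      rw [← hn, hcard]
      exact this.add even_two

theorem odd_crossings_of_strong_inversion (C : Set (ℝ × ℝ × ℝ))
    (hsym : rotX '' C = C)
    (haxis : ∃ a b : ℝ × ℝ × ℝ, a ≠ b ∧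
      C ∩ {p : ℝ × ℝ × ℝ | ∃ t : ℝ, p = (t, 0, 0)} = {a, b})
    (D : Set (ℝ × ℝ)) (hD : D = doublePoints projX C) (hfin : D.Finite) :
    Odd D.ncard := by
  -- membership in C is preserved by rotX
  have hrot : ∀ p ∈ C, rotX p ∈ C := by
    intro p hp
    rw [← hsym]
    exact ⟨p, hp, rfl⟩
  -- 0 ∈ D
  obtain ⟨a, b, hab, hset⟩ := haxis
  have ha : a ∈ C ∩ {p : ℝ × ℝ × ℝ | ∃ t : ℝ, p = (t, 0, 0)} := by
    rw [hset]; exact Or.inl rfl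
  have hb : b ∈ C ∩ {p : ℝ × ℝ × ℝ | ∃ t : ℝ, p = (t, 0, 0)} := by
    rw [hset]; exact Or.inr rfl
  obtain ⟨haC, ta, hta⟩ := ha
  obtain ⟨hbC, tb, htb⟩ := hb
  have h0 : (0 : ℝ × ℝ) ∈ D := by
    rw [hD]
    exact ⟨a, haC, b, hbC, hab, by simp [projX, hta], by simp [projX, htb]⟩
  -- D is symmetric under negation
  have hsymD : ∀ q ∈ D, -q ∈ D := by
    intro q hq
    rw [hD] at hq ⊢
    obtain ⟨p₁, hp₁, p₂, hp₂, hne, h1, h2⟩ := hq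
    refine ⟨rotX p₁, hrot p₁ hp₁, rotX p₂, hrot p₂ hp₂, ?_, ?_, ?_⟩
    · intro h
      apply hne
      have := congrArg rotX h
      simpa [rotX, Prod.ext_iff] using this
    · rw [← h1]; simp [rotX, projX, Prod.ext_iff]
    · rw [← h2]; simp [rotX, projX, Prod.ext_iff]
  -- split off 0
  have hD0 : D = insert (0 : ℝ × ℝ) (D \ {0}) := by
    rw [Set.insert_diff_singleton, Set.insert_eq_of_mem h0]
  have hfin' : (D \ {(0 : ℝ × ℝ)}).Finite := hfin.diff
  have heven : Even (D \ {(0 : ℝ × ℝ)}).ncard := by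
    apply even_ncard_of_involution (D \ {0}).ncard (D \ {0}) hfin' rfl (fun q => -q)
    · rintro q ⟨hq, hq0⟩
      refine ⟨hsymD q hq, ?_⟩
      simp only [Set.mem_singleton_iff] at hq0 ⊢
      intro h; apply hq0; simpa using congrArg Neg.neg h
    · intro q _; simp
    · rintro q ⟨_, hq0⟩ h
      simp only [Set.mem_singleton_iff] at hq0
      apply hq0
      rw [Prod.ext_iff] at h ⊢
      constructor
      · have := h.1; simp at this ⊢; linarith
      · have := h.2; simp at this ⊢; linarith
  have hcard : D.ncard = (D \ {(0 : ℝ × ℝ)}).ncard + 1 := by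
    conv_lhs => rw [hD0]
    rw [Set.ncard_insert_of_notMem (by simp) hfin']
  rw [hcard]
  exact heven.add_one
end
end

section
/- Let C ⊆ ℝ³ be the closed polygon with the eight vertices P₁ = (4,0,0), P₂ = (3,3,-1), P₃ = (0,4,0), P₄ = (-3,3,1), P₅ = (-4,0,0), P₆ = (-3,-3,-1), P₇ = (0,-4,0), P₈ = (3,-3,1), taken cyclically. Then the projection π_z(x,y,z) = (x,y) is injective on C; in particular the double-point set of π_z restricted to C is empty. -/
open Set

noncomputable section

/-- A piecewise-linear height function recovering z from (x,y) on the octagon. -/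
def octHeight : ℝ × ℝ → ℝ := fun q =>
  if 3 ≤ q.1 then -q.2 / 3
  else if 3 ≤ q.2 then -q.1 / 3
  else if q.1 ≤ -3 then q.2 / 3
  else if q.2 ≤ -3 then q.1 / 3
  else 0

theorem octagon_projZ_injective (V : Fin 8 → ℝ × ℝ × ℝ)
    (hV : V = ![(4, 0, 0), (3, 3, -1), (0, 4, 0), (-3, 3, 1),
                (-4, 0, 0), (-3, -3, -1), (0, -4, 0), (3, -3, 1)])
    (C : Set (ℝ × ℝ × ℝ))
    (hC : C = ⋃ i : Fin 8, segment ℝ (V i) (V (i + 1))) :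
    Set.InjOn projZ C ∧ doublePoints projZ C = ∅ := by
  have key : ∀ p ∈ C, p.2.2 = octHeight (p.1, p.2.1) := by
    intro p hp
    rw [hC] at hp
    simp only [mem_iUnion] at hp
    obtain ⟨i, hi⟩ := hp
    rw [segment_eq_image] at hi
    obtain ⟨t, ht, hp⟩ := hi
    subst hV
    subst hp
    fin_cases i <;>
      norm_num [octHeight, Fin.add_def, Prod.smul_mk, Prod.mk_add_mk, smul_eq_mul] <;>
      split_ifs <;>
      (try norm_num) <;> (intros; linarith [ht.1, ht.2])
  have hinj : Set.InjOn projZ C := by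
    intro p hp q hq hpq
    simp only [projZ, Prod.mk.injEq] at hpq
    obtain ⟨h1, h2⟩ := hpq
    have h3 : p.2.2 = q.2.2 := by rw [key p hp, key q hq, h1, h2]
    exact Prod.ext h1 (Prod.ext h2 h3)
  refine ⟨hinj, ?_⟩
  ext q
  simp only [doublePoints, mem_setOf_eq, mem_empty_iff_false, iff_false]
  rintro ⟨p₁, h₁, p₂, h₂, hne, e₁, e₂⟩
  exact hne (hinj h₁ h₂ (e₁.trans e₂.symm))
end
end

section
/- Let C ⊆ ℝ³ be the closed polygon with the eight vertices P₁ = (4,0,0), P₂ = (3,3,-1), P₃ = (0,4,0), P₄ = (-3,3,1), P₅ = (-4,0,0), P₆ = (-3,-3,-1), P₇ = (0,-4,0), P₈ = (3,-3,1), taken cyclically. Then the double-point set of the projection π_y(x,y,z) = (x,z) restricted to C equals the single point {(0,0)}, and the only points of C projecting to (0,0) are P₃ = (0,4,0) and P₇ = (0,-4,0). -/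
open Set

noncomputable section

lemma seg_param {a b p : ℝ × ℝ × ℝ} :
    p ∈ segment ℝ a b ↔ ∃ t : ℝ, 0 ≤ t ∧ t ≤ 1 ∧ p = (1-t) • a + t • b := by
  rw [segment_eq_image]
  constructor
  · rintro ⟨t, ⟨h0, h1⟩, rfl⟩; exact ⟨t, h0, h1, rfl⟩
  · rintro ⟨t, h0, h1, rfl⟩; exact ⟨t, ⟨h0, h1⟩, rfl⟩

lemma memC {x y z : ℝ}
    (h : ((x,y,z) : ℝ×ℝ×ℝ) ∈ ⋃ i : Fin 8, segment ℝ
      ((![(4, 0, 0), (3, 3, -1), (0, 4, 0), (-3, 3, 1),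
          (-4, 0, 0), (-3, -3, -1), (0, -4, 0), (3, -3, 1)] : Fin 8 → ℝ×ℝ×ℝ) i)
      ((![(4, 0, 0), (3, 3, -1), (0, 4, 0), (-3, 3, 1),
          (-4, 0, 0), (-3, -3, -1), (0, -4, 0), (3, -3, 1)] : Fin 8 → ℝ×ℝ×ℝ) (i+1))) :
    ∃ t : ℝ, 0 ≤ t ∧ t ≤ 1 ∧
      ((x = 4-t ∧ y = 3*t ∧ z = -t) ∨
       (x = 3-3*t ∧ y = 3+t ∧ z = -1+t) ∨
       (x = -3*t ∧ y = 4-t ∧ z = t) ∨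
       (x = -3-t ∧ y = 3-3*t ∧ z = 1-t) ∨
       (x = -4+t ∧ y = -3*t ∧ z = -t) ∨
       (x = -3+3*t ∧ y = -3-t ∧ z = -1+t) ∨
       (x = 3*t ∧ y = -4+t ∧ z = t) ∨
       (x = 3+t ∧ y = -3+3*t ∧ z = 1-t)) := by
  rw [mem_iUnion] at h
  obtain ⟨i, hi⟩ := h
  rw [seg_param] at hi
  obtain ⟨t, h0, h1, hp⟩ := hi
  refine ⟨t, h0, h1, ?_⟩
  fin_cases i
  · replace hp : ((x,y,z):ℝ×ℝ×ℝ) = (1-t) • ((4:ℝ),(0:ℝ),(0:ℝ)) + t • ((3:ℝ),(3:ℝ),(-1:ℝ)) := hp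
    simp [Prod.ext_iff] at hp
    obtain ⟨hx, hy, hz⟩ := hp
    exact Or.inl ⟨by linarith, by linarith, by linarith⟩
  · replace hp : ((x,y,z):ℝ×ℝ×ℝ) = (1-t) • ((3:ℝ),(3:ℝ),(-1:ℝ)) + t • ((0:ℝ),(4:ℝ),(0:ℝ)) := hp
    simp [Prod.ext_iff] at hp
    obtain ⟨hx, hy, hz⟩ := hp
    exact Or.inr (Or.inl ⟨by linarith, by linarith, by linarith⟩)
  · replace hp : ((x,y,z):ℝ×ℝ×ℝ) = (1-t) • ((0:ℝ),(4:ℝ),(0:ℝ)) + t • ((-3:ℝ),(3:ℝ),(1:ℝ)) := hp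
    simp [Prod.ext_iff] at hp
    obtain ⟨hx, hy, hz⟩ := hp
    exact Or.inr (Or.inr (Or.inl ⟨by linarith, by linarith, by linarith⟩))
  · replace hp : ((x,y,z):ℝ×ℝ×ℝ) = (1-t) • ((-3:ℝ),(3:ℝ),(1:ℝ)) + t • ((-4:ℝ),(0:ℝ),(0:ℝ)) := hp
    simp [Prod.ext_iff] at hp
    obtain ⟨hx, hy, hz⟩ := hp
    exact Or.inr (Or.inr (Or.inr (Or.inl ⟨by linarith, by linarith, by linarith⟩)))
  · replace hp : ((x,y,z):ℝ×ℝ×ℝ) = (1-t) • ((-4:ℝ),(0:ℝ),(0:ℝ)) + t • ((-3:ℝ),(-3:ℝ),(-1:ℝ)) := hp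
    simp [Prod.ext_iff] at hp
    obtain ⟨hx, hy, hz⟩ := hp
    exact Or.inr (Or.inr (Or.inr (Or.inr (Or.inl ⟨by linarith, by linarith, by linarith⟩))))
  · replace hp : ((x,y,z):ℝ×ℝ×ℝ) = (1-t) • ((-3:ℝ),(-3:ℝ),(-1:ℝ)) + t • ((0:ℝ),(-4:ℝ),(0:ℝ)) := hp
    simp [Prod.ext_iff] at hp
    obtain ⟨hx, hy, hz⟩ := hp
    exact Or.inr (Or.inr (Or.inr (Or.inr (Or.inr (Or.inl ⟨by linarith, by linarith, by linarith⟩)))))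
  · replace hp : ((x,y,z):ℝ×ℝ×ℝ) = (1-t) • ((0:ℝ),(-4:ℝ),(0:ℝ)) + t • ((3:ℝ),(-3:ℝ),(1:ℝ)) := hp
    simp [Prod.ext_iff] at hp
    obtain ⟨hx, hy, hz⟩ := hp
    exact Or.inr (Or.inr (Or.inr (Or.inr (Or.inr (Or.inr (Or.inl ⟨by linarith, by linarith, by linarith⟩))))))
  · replace hp : ((x,y,z):ℝ×ℝ×ℝ) = (1-t) • ((3:ℝ),(-3:ℝ),(1:ℝ)) + t • ((4:ℝ),(0:ℝ),(0:ℝ)) := hp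
    simp [Prod.ext_iff] at hp
    obtain ⟨hx, hy, hz⟩ := hp
    exact Or.inr (Or.inr (Or.inr (Or.inr (Or.inr (Or.inr (Or.inr ⟨by linarith, by linarith, by linarith⟩))))))

theorem octagon_projY_double_points (V : Fin 8 → ℝ × ℝ × ℝ)
    (hV : V = ![(4, 0, 0), (3, 3, -1), (0, 4, 0), (-3, 3, 1),
                (-4, 0, 0), (-3, -3, -1), (0, -4, 0), (3, -3, 1)])
    (C : Set (ℝ × ℝ × ℝ))
    (hC : C = ⋃ i : Fin 8, segment ℝ (V i) (V (i + 1))) :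
    doublePoints projY C = {((0 : ℝ), (0 : ℝ))} ∧
    {p ∈ C | projY p = ((0 : ℝ), (0 : ℝ))} =
      {((0 : ℝ), (4 : ℝ), (0 : ℝ)), ((0 : ℝ), (-4 : ℝ), (0 : ℝ))} := by
  subst hV
  subst hC
  constructor
  · ext q
    simp only [doublePoints, mem_setOf_eq, mem_singleton_iff]
    constructor
    · rintro ⟨p₁, h₁, p₂, h₂, hne, rfl, hq2⟩
      obtain ⟨x₁, y₁, z₁⟩ := p₁
      obtain ⟨x₂, y₂, z₂⟩ := p₂
      obtain ⟨s, hs0, hs1, hd₁⟩ := memC h₁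
      obtain ⟨t, ht0, ht1, hd₂⟩ := memC h₂
      simp only [projY, Prod.mk.injEq] at hq2 ⊢
      obtain ⟨hx, hz⟩ := hq2
      rcases hd₁ with ⟨hx₁, hy₁, hz₁⟩ | ⟨hx₁, hy₁, hz₁⟩ | ⟨hx₁, hy₁, hz₁⟩ | ⟨hx₁, hy₁, hz₁⟩ |
        ⟨hx₁, hy₁, hz₁⟩ | ⟨hx₁, hy₁, hz₁⟩ | ⟨hx₁, hy₁, hz₁⟩ | ⟨hx₁, hy₁, hz₁⟩ <;>
      rcases hd₂ with ⟨hx₂, hy₂, hz₂⟩ | ⟨hx₂, hy₂, hz₂⟩ | ⟨hx₂, hy₂, hz₂⟩ | ⟨hx₂, hy₂, hz₂⟩ |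
        ⟨hx₂, hy₂, hz₂⟩ | ⟨hx₂, hy₂, hz₂⟩ | ⟨hx₂, hy₂, hz₂⟩ | ⟨hx₂, hy₂, hz₂⟩ <;>
      first
        | exact ⟨by linarith, by linarith⟩
        | exact absurd
            (show ((x₁,y₁,z₁) : ℝ×ℝ×ℝ) = (x₂,y₂,z₂) by
              simp only [Prod.mk.injEq]
              exact ⟨by linarith, by linarith, by linarith⟩) hne
        | (exfalso; linarith)
    · rintro rfl
      refine ⟨((0:ℝ),(4:ℝ),(0:ℝ)), mem_iUnion.2 ⟨2, left_mem_segment ℝ _ _⟩,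
        ((0:ℝ),(-4:ℝ),(0:ℝ)), mem_iUnion.2 ⟨6, left_mem_segment ℝ _ _⟩, ?_, rfl, rfl⟩
      norm_num [Prod.ext_iff]
  · ext p
    obtain ⟨x, y, z⟩ := p
    simp only [mem_sep_iff, mem_insert_iff, mem_singleton_iff, projY, Prod.mk.injEq]
    constructor
    · rintro ⟨hpC, hx, hz⟩
      obtain ⟨t, ht0, ht1, hd⟩ := memC hpC
      rcases hd with ⟨hx₁, hy₁, hz₁⟩ | ⟨hx₁, hy₁, hz₁⟩ | ⟨hx₁, hy₁, hz₁⟩ | ⟨hx₁, hy₁, hz₁⟩ |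
        ⟨hx₁, hy₁, hz₁⟩ | ⟨hx₁, hy₁, hz₁⟩ | ⟨hx₁, hy₁, hz₁⟩ | ⟨hx₁, hy₁, hz₁⟩ <;>
      first
        | exact Or.inl ⟨by linarith, by linarith, by linarith⟩
        | exact Or.inr ⟨by linarith, by linarith, by linarith⟩
        | (exfalso; linarith)
    · rintro (⟨rfl, rfl, rfl⟩ | ⟨rfl, rfl, rfl⟩)
      · exact ⟨mem_iUnion.2 ⟨2, left_mem_segment ℝ _ _⟩, rfl, rfl⟩
      · exact ⟨mem_iUnion.2 ⟨6, left_mem_segment ℝ _ _⟩, rfl, rfl⟩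
end
end
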